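/- The unique critical point T^x of the function −F_0(T) on Γ(x) satisfies (1/k) Σ_{i=1}^k T^x_{k,i} = (1/N) Σ_{i=1}^N x_i for all 1 ≤ k ≤ N−1; that is, each row of the critical array has the same average as the top row x. -/

import Mathlib

noncomputable section
open Real

/-- The Toda potential `-F_0(T) = Σ_{k<N-1} Σ_{i≤k} (e^{A_{k,i}-A_{k+1,i}} + e^{A_{k+1,i+1}-A_{k,i}})`
of a triangular array `A` (0-indexed rows `0, …, N-1`, row `k` with entries `0, …, k`). -/
def todaPot (N : ℕ) (A : ℕ → ℕ → ℝ) : ℝ :=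
  ∑ k ∈ Finset.range (N - 1), ∑ i ∈ Finset.range (k + 1),
    (Real.exp (A k i - A (k + 1) i) + Real.exp (A (k + 1) (i + 1) - A k i))

/-- Update the single entry `(k, i)` of the array `A` to the value `r`. -/
def updEntry (A : ℕ → ℕ → ℝ) (k i : ℕ) (r : ℝ) : ℕ → ℕ → ℝ :=
  fun k' i' => if k' = k ∧ i' = i then r else A k' i'

lemma hasDerivAt_term (A : ℕ → ℕ → ℝ) (k i k' i' : ℕ) :
    HasDerivAt (fun r => Real.exp (updEntry A k i r k' i' - updEntry A k i r (k'+1) i')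
        + Real.exp (updEntry A k i r (k'+1) (i'+1) - updEntry A k i r k' i'))
      ((if k' = k ∧ i' = i then
          Real.exp (A k i - A (k+1) i) - Real.exp (A (k+1) (i+1) - A k i) else 0)
       + (if k' + 1 = k ∧ i' = i then -Real.exp (A k' i' - A k i) else 0)
       + (if k' + 1 = k ∧ i' + 1 = i then Real.exp (A k i - A k' i') else 0))
      (A k i) := by
  by_cases h1 : k' = k ∧ i' = i
  · obtain ⟨rfl, rfl⟩ := h1
    have hne1 : ¬(k' + 1 = k' ∧ i' = i') := by omega
    have hne2 : ¬(k' + 1 = k' ∧ i' + 1 = i') := by omega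
    have hfun : (fun r => Real.exp (updEntry A k' i' r k' i' - updEntry A k' i' r (k'+1) i')
        + Real.exp (updEntry A k' i' r (k'+1) (i'+1) - updEntry A k' i' r k' i'))
        = fun r => Real.exp (r - A (k'+1) i') + Real.exp (A (k'+1) (i'+1) - r) := by
      funext r
      simp [updEntry, (show k' + 1 ≠ k' by omega)]
    rw [hfun, if_pos (⟨rfl, rfl⟩ : k' = k' ∧ i' = i'), if_neg hne1, if_neg hne2, add_zero,
      add_zero]
    have hd1 : HasDerivAt (fun r : ℝ => Real.exp (r - A (k'+1) i'))
        (Real.exp (A k' i' - A (k'+1) i') * 1) (A k' i') :=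
      ((hasDerivAt_id _).sub_const _).exp
    have hd2 : HasDerivAt (fun r : ℝ => Real.exp (A (k'+1) (i'+1) - r))
        (Real.exp (A (k'+1) (i'+1) - A k' i') * (0 - 1)) (A k' i') :=
      ((hasDerivAt_const _ _).sub (hasDerivAt_id _)).exp
    refine (hd1.fun_add hd2).congr_deriv ?_
    ring
  · by_cases h2 : k' + 1 = k ∧ i' = i
    · obtain ⟨rfl, rfl⟩ := h2
      have hne0 : ¬(k' = k' + 1 ∧ i' = i') := by omega
      have hne2 : ¬(k' + 1 = k' + 1 ∧ i' + 1 = i') := by omega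
      have hfun : (fun r => Real.exp (updEntry A (k'+1) i' r k' i' - updEntry A (k'+1) i' r (k'+1) i')
          + Real.exp (updEntry A (k'+1) i' r (k'+1) (i'+1) - updEntry A (k'+1) i' r k' i'))
          = fun r => Real.exp (A k' i' - r) + Real.exp (A (k'+1) (i'+1) - A k' i') := by
        funext r
        simp [updEntry, (show k' ≠ k' + 1 by omega), (show i' + 1 ≠ i' by omega)]
      rw [hfun, if_neg hne0, if_pos (⟨rfl, rfl⟩ : k' + 1 = k' + 1 ∧ i' = i'), if_neg hne2,
        zero_add, add_zero]
      have hd1 : HasDerivAt (fun r : ℝ => Real.exp (A k' i' - r))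
          (Real.exp (A k' i' - A (k'+1) i') * (0 - 1)) (A (k'+1) i') :=
        ((hasDerivAt_const _ _).sub (hasDerivAt_id _)).exp
      refine (hd1.add_const (Real.exp (A (k'+1) (i'+1) - A k' i'))).congr_deriv ?_
      ring
    · by_cases h3 : k' + 1 = k ∧ i' + 1 = i
      · obtain ⟨rfl, rfl⟩ := h3
        have hne0 : ¬(k' = k' + 1 ∧ i' = i' + 1) := by omega
        have hne1 : ¬(k' + 1 = k' + 1 ∧ i' = i' + 1) := by omega
        have hfun : (fun r => Real.exp (updEntry A (k'+1) (i'+1) r k' i' - updEntry A (k'+1) (i'+1) r (k'+1) i')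
            + Real.exp (updEntry A (k'+1) (i'+1) r (k'+1) (i'+1) - updEntry A (k'+1) (i'+1) r k' i'))
            = fun r => Real.exp (A k' i' - A (k'+1) i') + Real.exp (r - A k' i') := by
          funext r
          simp [updEntry, (show k' ≠ k' + 1 by omega), (show i' ≠ i' + 1 by omega)]
        rw [hfun, if_neg hne0, if_neg hne1,
          if_pos (⟨rfl, rfl⟩ : k' + 1 = k' + 1 ∧ i' + 1 = i' + 1), zero_add, zero_add]
        have hd2 : HasDerivAt (fun r : ℝ => Real.exp (r - A k' i'))
            (Real.exp (A (k'+1) (i'+1) - A k' i') * 1) (A (k'+1) (i'+1)) :=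
          ((hasDerivAt_id _).sub_const _).exp
        refine (hd2.const_add (Real.exp (A k' i' - A (k'+1) i'))).congr_deriv ?_
        ring
      · have hfun : (fun r => Real.exp (updEntry A k i r k' i' - updEntry A k i r (k'+1) i')
            + Real.exp (updEntry A k i r (k'+1) (i'+1) - updEntry A k i r k' i'))
            = fun _ => Real.exp (A k' i' - A (k'+1) i') + Real.exp (A (k'+1) (i'+1) - A k' i') := by
          funext r
          simp only [updEntry]
          rw [if_neg (by tauto : ¬(k' = k ∧ i' = i)), if_neg (by tauto : ¬(k' + 1 = k ∧ i' = i)),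
            if_neg (by tauto : ¬(k' + 1 = k ∧ i' + 1 = i))]
        rw [hfun, if_neg h1, if_neg h2, if_neg h3, add_zero, add_zero]
        exact hasDerivAt_const _ _

lemma double_sum_pt (N p q : ℕ) (hp : p < N - 1) (hq : q ≤ p) (f : ℕ → ℕ → ℝ) :
    ∑ k' ∈ Finset.range (N - 1), ∑ i' ∈ Finset.range (k' + 1),
      (if k' = p ∧ i' = q then f k' i' else 0) = f p q := by
  rw [Finset.sum_eq_single_of_mem p (Finset.mem_range.2 hp)]
  · rw [Finset.sum_eq_single_of_mem q (Finset.mem_range.2 (by omega))]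
    · rw [if_pos ⟨rfl, rfl⟩]
    · intro b _ hb; rw [if_neg (by tauto)]
  · intro b _ hb; exact Finset.sum_eq_zero fun i' _ => if_neg (by tauto)

lemma double_sum_zero {N : ℕ} (C : ℕ → ℕ → Prop) [∀ a b, Decidable (C a b)] (f : ℕ → ℕ → ℝ)
    (h : ∀ k' i', k' < N - 1 → i' ≤ k' → ¬ C k' i') :
    ∑ k' ∈ Finset.range (N - 1), ∑ i' ∈ Finset.range (k' + 1),
      (if C k' i' then f k' i' else 0) = 0 :=
  Finset.sum_eq_zero fun k hk => Finset.sum_eq_zero fun i hi =>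
    if_neg (h _ _ (Finset.mem_range.1 hk) (by
      have := Finset.mem_range.1 hi; omega))

lemma critEq (N : ℕ) (A : ℕ → ℕ → ℝ)
    (hcrit : ∀ k < N - 1, ∀ i ≤ k,
      deriv (fun r => - todaPot N (updEntry A k i r)) (A k i) = 0) :
    ∀ k < N - 1, ∀ i ≤ k,
      Real.exp (A k i - A (k+1) i) - Real.exp (A (k+1) (i+1) - A k i)
      + (if i < k then -Real.exp (A (k-1) i - A k i) else 0)
      + (if 1 ≤ i then Real.exp (A k i - A (k-1) (i-1)) else 0) = 0 := by
  intro k hk i hi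
  set D : ℝ := ∑ k' ∈ Finset.range (N - 1), ∑ i' ∈ Finset.range (k' + 1),
      ((if k' = k ∧ i' = i then
          Real.exp (A k i - A (k+1) i) - Real.exp (A (k+1) (i+1) - A k i) else 0)
       + (if k' + 1 = k ∧ i' = i then -Real.exp (A k' i' - A k i) else 0)
       + (if k' + 1 = k ∧ i' + 1 = i then Real.exp (A k i - A k' i') else 0)) with hDdef
  have hD : HasDerivAt (fun r => todaPot N (updEntry A k i r)) D (A k i) := by
    unfold todaPot
    exact HasDerivAt.fun_sum fun k' _ => HasDerivAt.fun_sum fun i' _ => hasDerivAt_term A k i k' i'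
  have hD0 : D = 0 := by
    have := (hD.fun_neg).deriv
    rw [hcrit k hk i hi] at this
    linarith [this]
  have hT1 : ∑ k' ∈ Finset.range (N - 1), ∑ i' ∈ Finset.range (k' + 1),
      (if k' = k ∧ i' = i then
        Real.exp (A k i - A (k+1) i) - Real.exp (A (k+1) (i+1) - A k i) else 0)
      = Real.exp (A k i - A (k+1) i) - Real.exp (A (k+1) (i+1) - A k i) :=
    double_sum_pt N k i hk hi _
  have hT2 : ∑ k' ∈ Finset.range (N - 1), ∑ i' ∈ Finset.range (k' + 1),
      (if k' + 1 = k ∧ i' = i then -Real.exp (A k' i' - A k i) else 0)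
      = (if i < k then -Real.exp (A (k-1) i - A k i) else 0) := by
    by_cases hik : i < k
    · rw [if_pos hik]
      have hcond : ∀ k' : ℕ, (k' + 1 = k) = (k' = k - 1) := fun k' => propext (by omega)
      simp only [hcond]
      exact double_sum_pt N (k-1) i (by omega) (by omega) (fun k' i' => -Real.exp (A k' i' - A k i))
    · rw [if_neg hik]
      exact double_sum_zero _ _ (by intro k' i' h1 h2; omega)
  have hT3 : ∑ k' ∈ Finset.range (N - 1), ∑ i' ∈ Finset.range (k' + 1),
      (if k' + 1 = k ∧ i' + 1 = i then Real.exp (A k i - A k' i') else 0)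
      = (if 1 ≤ i then Real.exp (A k i - A (k-1) (i-1)) else 0) := by
    by_cases hik : 1 ≤ i
    · rw [if_pos hik]
      have hcond1 : ∀ k' : ℕ, (k' + 1 = k) = (k' = k - 1) := fun k' => propext (by omega)
      have hcond2 : ∀ i' : ℕ, (i' + 1 = i) = (i' = i - 1) := fun i' => propext (by omega)
      simp only [hcond1, hcond2]
      exact double_sum_pt N (k-1) (i-1) (by omega) (by omega)
        (fun k' i' => Real.exp (A k i - A k' i'))
    · rw [if_neg hik]
      exact double_sum_zero _ _ (by intro k' i' h1 h2; omega)
  have hsplit : D = (∑ k' ∈ Finset.range (N - 1), ∑ i' ∈ Finset.range (k' + 1),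
      (if k' = k ∧ i' = i then
        Real.exp (A k i - A (k+1) i) - Real.exp (A (k+1) (i+1) - A k i) else 0))
      + (∑ k' ∈ Finset.range (N - 1), ∑ i' ∈ Finset.range (k' + 1),
      (if k' + 1 = k ∧ i' = i then -Real.exp (A k' i' - A k i) else 0))
      + (∑ k' ∈ Finset.range (N - 1), ∑ i' ∈ Finset.range (k' + 1),
      (if k' + 1 = k ∧ i' + 1 = i then Real.exp (A k i - A k' i') else 0)) := by
    rw [hDdef]
    simp only [Finset.sum_add_distrib]
  rw [hT1, hT2, hT3] at hsplit
  linarith [hD0, hsplit]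
lemma prod_pow_shift (f : ℕ → ℝ) (n : ℕ) :
    ∏ i ∈ Finset.range (n+1), f i ^ (n+1-i)
      = (∏ i ∈ Finset.range n, f i ^ (n-i)) * ∏ i ∈ Finset.range (n+1), f i := by
  have h1 : ∏ i ∈ Finset.range (n+1), f i ^ (n+1-i)
      = ∏ i ∈ Finset.range (n+1), (f i ^ (n-i) * f i) := by
    refine Finset.prod_congr rfl fun i hi => ?_
    have hi' : i ≤ n := by have := Finset.mem_range.1 hi; omega
    rw [← pow_succ, Nat.succ_sub hi']
  rw [h1, Finset.prod_mul_distrib, Finset.prod_range_succ (fun i => f i ^ (n-i)),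
    Nat.sub_self, pow_zero, mul_one]

lemma toda_row_prod (K : ℕ) (a b a' b' : ℕ → ℝ)
    (hb : ∀ i, b i ≠ 0)
    (ha'K : a' K = 0)
    (heq0 : a 0 = b 0 + a' 0)
    (heq : ∀ m, m + 1 ≤ K → a (m+1) - b (m+1) = a' (m+1) - b' m)
    (hprod : ∀ j, j < K → a (j+1) * b j = a' j * b' j) :
    (∏ i ∈ Finset.range (K+1), a i ^ (K+1-i)) * ∏ j ∈ Finset.range K, b' j ^ (j+1)
      = (∏ i ∈ Finset.range (K+1), b i ^ (i+1)) * ∏ j ∈ Finset.range K, a' j ^ (K-j) := by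
  obtain ⟨w, hw⟩ : ∃ w : ℕ → ℝ, ∀ m, w m = b m + a' m :=
    ⟨fun m => b m + a' m, fun _ => rfl⟩
  have lemA : ∀ m, m + 1 ≤ K → w (m+1) * b m = w m * b' m := by
    intro m hm
    have h1 := heq m hm
    have h2 := hprod m (by omega)
    rw [hw (m+1), hw m]
    linear_combination (- b m) * h1 + h2
  have lemC : ∀ m, m ≤ K → ∏ i ∈ Finset.range (m+1), a i
      = (∏ j ∈ Finset.range m, a' j) * w m := by
    intro m
    induction m with
    | zero => intro _; simp [hw 0, heq0]
    | succ m ih =>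
      intro hm
      rw [Finset.prod_range_succ, ih (by omega), Finset.prod_range_succ]
      have key : w m * a (m+1) = a' m * w (m+1) := by
        apply mul_right_cancel₀ (hb m)
        linear_combination (w m) * hprod m (by omega) - (a' m) * lemA m hm
      linear_combination (∏ j ∈ Finset.range m, a' j) * key
  have lemB : ∀ m, m ≤ K →
      (∏ i ∈ Finset.range (m+1), a i ^ (m+1-i)) * ∏ j ∈ Finset.range m, b' j ^ (j+1)
        = ((∏ i ∈ Finset.range m, b i ^ (i+1)) * ∏ j ∈ Finset.range m, a' j ^ (m-j))
            * w m ^ (m+1) := by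
    intro m
    induction m with
    | zero =>
      intro _
      simp [hw 0, heq0]
    | succ m ih =>
      intro hm
      have ih' := ih (by omega)
      have hC := lemC (m+1) hm
      have hpow : w m ^ (m+1) * b' m ^ (m+1) = w (m+1) ^ (m+1) * b m ^ (m+1) := by
        rw [← mul_pow, ← mul_pow, lemA m hm]
      rw [prod_pow_shift a (m+1), Finset.prod_range_succ (fun j => b' j ^ (j+1)),
        Finset.prod_range_succ (fun i => b i ^ (i+1)), prod_pow_shift a' m, pow_succ (w (m+1))]
      rw [hC]
      linear_combination
        ((∏ j ∈ Finset.range (m+1), a' j) * w (m+1) * b' m ^ (m+1)) * ih'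
        + ((∏ i ∈ Finset.range m, b i ^ (i+1)) * (∏ j ∈ Finset.range m, a' j ^ (m-j))
            * (∏ j ∈ Finset.range (m+1), a' j) * w (m+1)) * hpow
  have hfin := lemB K le_rfl
  have hwK : w K = b K := by rw [hw K, ha'K, add_zero]
  rw [hwK] at hfin
  rw [hfin, Finset.prod_range_succ (fun i => b i ^ (i+1))]
  ring

lemma ite_neg_zero {c : Prop} [Decidable c] (u : ℝ) :
    (if c then -u else 0) = -(if c then u else 0) := by
  split_ifs <;> simp
lemma sum_rearrange (K : ℕ) (f g h : ℕ → ℝ) :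
    (∑ i ∈ Finset.range (K+1), ((K:ℝ)+1-i) * (f i - g i))
      + (∑ j ∈ Finset.range K, ((j:ℝ)+1) * (f (j+1) - h j))
      - (∑ i ∈ Finset.range (K+1), ((i:ℝ)+1) * (g (i+1) - f i))
      - (∑ j ∈ Finset.range K, ((K:ℝ)-j) * (h j - f j))
    = ((K:ℝ)+1) * (2 * (∑ i ∈ Finset.range (K+1), f i)
        - (∑ i ∈ Finset.range (K+2), g i) - (∑ j ∈ Finset.range K, h j)) := by
  have e1 : ∑ j ∈ Finset.range K, ((j:ℝ)+1) * f (j+1)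
      = ∑ i ∈ Finset.range (K+1), (i:ℝ) * f i := by
    rw [Finset.sum_range_succ' (fun i => (i:ℝ) * f i) K]
    push_cast; ring
  have e2 : ∑ i ∈ Finset.range (K+1), ((i:ℝ)+1) * g (i+1)
      = ∑ i ∈ Finset.range (K+2), (i:ℝ) * g i := by
    rw [Finset.sum_range_succ' (fun i => (i:ℝ) * g i) (K+1)]
    push_cast; ring
  have e3 : ∑ i ∈ Finset.range (K+1), ((K:ℝ)+1-i) * g i
      = ∑ i ∈ Finset.range (K+2), ((K:ℝ)+1-i) * g i := by
    rw [Finset.sum_range_succ (fun i => ((K:ℝ)+1-i) * g i) (K+1)]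
    push_cast; ring
  have e4 : ∑ j ∈ Finset.range K, ((K:ℝ)-j) * f j
      = ∑ j ∈ Finset.range (K+1), ((K:ℝ)-j) * f j := by
    rw [Finset.sum_range_succ (fun j => ((K:ℝ)-j) * f j) K]
    push_cast; ring
  simp only [mul_sub, Finset.sum_sub_distrib]
  rw [e1, e2, e3, e4]
  have hF : (∑ i ∈ Finset.range (K+1), ((K:ℝ)+1-i) * f i)
      + (∑ i ∈ Finset.range (K+1), (i:ℝ) * f i)
      + (∑ i ∈ Finset.range (K+1), ((i:ℝ)+1) * f i)
      + (∑ i ∈ Finset.range (K+1), ((K:ℝ)-i) * f i)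
      = (2*((K:ℝ)+1)) * ∑ i ∈ Finset.range (K+1), f i := by
    rw [← Finset.sum_add_distrib, ← Finset.sum_add_distrib, ← Finset.sum_add_distrib,
      Finset.mul_sum]
    exact Finset.sum_congr rfl fun i _ => by ring
  have hG : (∑ i ∈ Finset.range (K+2), ((K:ℝ)+1-i) * g i)
      + (∑ i ∈ Finset.range (K+2), (i:ℝ) * g i)
      = ((K:ℝ)+1) * ∑ i ∈ Finset.range (K+2), g i := by
    rw [← Finset.sum_add_distrib, Finset.mul_sum]
    exact Finset.sum_congr rfl fun i _ => by ring
  have hH : (∑ j ∈ Finset.range K, ((j:ℝ)+1) * h j)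
      + (∑ j ∈ Finset.range K, ((K:ℝ)-j) * h j)
      = ((K:ℝ)+1) * ∑ j ∈ Finset.range K, h j := by
    rw [← Finset.sum_add_distrib, Finset.mul_sum]
    exact Finset.sum_congr rfl fun j _ => by ring
  linarith

lemma row_recurrence (N : ℕ) (A : ℕ → ℕ → ℝ) (K : ℕ) (hK1 : 1 ≤ K) (hK : K < N - 1)
    (hE : ∀ k < N - 1, ∀ i ≤ k,
      Real.exp (A k i - A (k+1) i) - Real.exp (A (k+1) (i+1) - A k i)
      + (if i < k then -Real.exp (A (k-1) i - A k i) else 0)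
      + (if 1 ≤ i then Real.exp (A k i - A (k-1) (i-1)) else 0) = 0) :
    2 * (∑ i ∈ Finset.range (K+1), A K i)
      = (∑ i ∈ Finset.range (K+2), A (K+1) i) + ∑ i ∈ Finset.range K, A (K-1) i := by
  set a : ℕ → ℝ := fun i => Real.exp (A K i - A (K+1) i) with ha
  set b : ℕ → ℝ := fun i => Real.exp (A (K+1) (i+1) - A K i) with hb
  set a' : ℕ → ℝ := fun j => if j < K then Real.exp (A (K-1) j - A K j) else 0 with ha'
  set b' : ℕ → ℝ := fun j => Real.exp (A K (j+1) - A (K-1) j) with hb'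
  have eqn : ∀ i ≤ K, a i - b i
      = (if i < K then Real.exp (A (K-1) i - A K i) else 0)
        - (if 1 ≤ i then Real.exp (A K i - A (K-1) (i-1)) else 0) := by
    intro i hi
    have h := hE K hK i hi
    rw [ite_neg_zero] at h
    simp only [ha, hb]
    linarith
  have hprodid := toda_row_prod K a b a' b'
    (fun i => Real.exp_ne_zero _)
    (by simp only [ha']; rw [if_neg (lt_irrefl K)])
    (by
      have h := eqn 0 (by omega)
      rw [if_neg (by omega : ¬ (1 ≤ 0))] at h
      simp only [ha']
      linarith)
    (by
      intro m hm
      have h := eqn (m+1) (by omega)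
      rw [if_pos (by omega : 1 ≤ m + 1)] at h
      simp only [Nat.add_sub_cancel] at h
      simp only [ha', hb']
      linarith)
    (by
      intro j hj
      simp only [ha, hb, ha', hb']
      rw [if_pos hj, ← Real.exp_add, ← Real.exp_add]
      congr 1
      ring)
  -- take logarithms
  have hL1 : Real.log (∏ i ∈ Finset.range (K+1), a i ^ (K+1-i))
      = ∑ i ∈ Finset.range (K+1), ((K:ℝ)+1-i) * (A K i - A (K+1) i) := by
    rw [Real.log_prod (fun i _ => pow_ne_zero _ (Real.exp_ne_zero _))]
    refine Finset.sum_congr rfl fun i hi => ?_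
    have hi' : i ≤ K := by have := Finset.mem_range.1 hi; omega
    rw [Real.log_pow, Real.log_exp, Nat.cast_sub (by omega : i ≤ K + 1)]
    push_cast
    ring
  have hL2 : Real.log (∏ j ∈ Finset.range K, b' j ^ (j+1))
      = ∑ j ∈ Finset.range K, ((j:ℝ)+1) * (A K (j+1) - A (K-1) j) := by
    rw [Real.log_prod (fun j _ => pow_ne_zero _ (Real.exp_ne_zero _))]
    refine Finset.sum_congr rfl fun j hj => ?_
    rw [Real.log_pow, Real.log_exp]
    push_cast
    ring
  have hL3 : Real.log (∏ i ∈ Finset.range (K+1), b i ^ (i+1))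
      = ∑ i ∈ Finset.range (K+1), ((i:ℝ)+1) * (A (K+1) (i+1) - A K i) := by
    rw [Real.log_prod (fun i _ => pow_ne_zero _ (Real.exp_ne_zero _))]
    refine Finset.sum_congr rfl fun i hi => ?_
    rw [Real.log_pow, Real.log_exp]
    push_cast
    ring
  have hL4 : Real.log (∏ j ∈ Finset.range K, a' j ^ (K-j))
      = ∑ j ∈ Finset.range K, ((K:ℝ)-j) * (A (K-1) j - A K j) := by
    have ha'val : ∀ j, j < K → a' j = Real.exp (A (K-1) j - A K j) := by
      intro j hj
      simp only [ha']
      rw [if_pos hj]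
    rw [Real.log_prod (fun j hj => pow_ne_zero _ (by
      rw [ha'val j (Finset.mem_range.1 hj)]; exact Real.exp_ne_zero _))]
    refine Finset.sum_congr rfl fun j hj => ?_
    have hj' : j < K := Finset.mem_range.1 hj
    rw [Real.log_pow, ha'val j hj', Real.log_exp, Nat.cast_sub (by omega : j ≤ K)]
  have hlog : (∑ i ∈ Finset.range (K+1), ((K:ℝ)+1-i) * (A K i - A (K+1) i))
      + (∑ j ∈ Finset.range K, ((j:ℝ)+1) * (A K (j+1) - A (K-1) j))
      = (∑ i ∈ Finset.range (K+1), ((i:ℝ)+1) * (A (K+1) (i+1) - A K i))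
        + (∑ j ∈ Finset.range K, ((K:ℝ)-j) * (A (K-1) j - A K j)) := by
    rw [← hL1, ← hL2, ← hL3, ← hL4,
      ← Real.log_mul (Finset.prod_ne_zero_iff.2 fun i _ => pow_ne_zero _ (Real.exp_ne_zero _))
        (Finset.prod_ne_zero_iff.2 fun j _ => pow_ne_zero _ (Real.exp_ne_zero _)),
      ← Real.log_mul (Finset.prod_ne_zero_iff.2 fun i _ => pow_ne_zero _ (Real.exp_ne_zero _))
        (Finset.prod_ne_zero_iff.2 fun j hj => pow_ne_zero _ (by
          simp only [ha']; rw [if_pos (Finset.mem_range.1 hj)]; exact Real.exp_ne_zero _)),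
      hprodid]
  have hre := sum_rearrange K (A K) (A (K+1)) (A (K-1))
  have hzero : ((K:ℝ)+1) * (2 * (∑ i ∈ Finset.range (K+1), A K i)
      - (∑ i ∈ Finset.range (K+2), A (K+1) i) - (∑ j ∈ Finset.range K, A (K-1) j)) = 0 := by
    rw [← hre]
    linarith
  have hKne : ((K:ℝ)+1) ≠ 0 := by positivity
  have := mul_eq_zero.1 hzero
  rcases this with h | h
  · exact absurd h hKne
  · linarith

/-- At a critical point of `F_0` on `Γ(x)` (all partial derivatives in the free entries vanish),
every row of the array has the same average as the top row `x`. -/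
theorem critical_point_row_averages (N : ℕ) (hN : 1 ≤ N) (x : ℕ → ℝ) (A : ℕ → ℕ → ℝ)
    (htop : ∀ i < N, A (N - 1) i = x i)
    (hcrit : ∀ k < N - 1, ∀ i ≤ k,
      deriv (fun r => - todaPot N (updEntry A k i r)) (A k i) = 0) :
    ∀ k < N - 1,
      (∑ i ∈ Finset.range (k + 1), A k i) / (k + 1)
        = (∑ i ∈ Finset.range N, x i) / N := by
  have hE := critEq N A hcrit
  intro k hk
  have key : ∀ K, K < N → (∑ i ∈ Finset.range (K+1), A K i) = ((K:ℝ)+1) * A 0 0 := by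
    intro K
    induction K using Nat.strong_induction_on with
    | _ K ih =>
      intro hKN
      match K, ih with
      | 0, _ =>
        rw [Finset.sum_range_one]
        norm_num
      | 1, ih =>
        have h0 := hE 0 (by omega) 0 (le_refl 0)
        norm_num at h0
        have h1 : A 0 0 - A 1 0 = A 1 1 - A 0 0 := Real.exp_eq_exp.mp (by linarith)
        rw [Finset.sum_range_succ, Finset.sum_range_one]
        push_cast
        linarith
      | (K+2), ih =>
        have hrec := row_recurrence N A (K+1) (by omega) (by omega) hE
        simp only [Nat.add_sub_cancel] at hrec
        have ih1 := ih (K+1) (by omega) (by omega)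
        have ih0 := ih K (by omega) (by omega)
        have hconv : ∑ i ∈ Finset.range (K+1+1), A (K+1) i = ((K:ℝ)+1+1) * A 0 0 := by
          rw [ih1]; push_cast; ring
        have hconv0 : ∑ i ∈ Finset.range (K+1), A K i = ((K:ℝ)+1) * A 0 0 := by
          rw [ih0]
        push_cast
        have : (2:ℝ) * (((K:ℝ)+1+1) * A 0 0)
            = (∑ i ∈ Finset.range (K+1+1+1), A (K+1+1) i) + ((K:ℝ)+1) * A 0 0 := by
          rw [← hconv, ← hconv0]
          exact_mod_cast hrec
        have hg : ∑ i ∈ Finset.range (K+1+1+1), A (K+1+1) i = ((K:ℝ)+2+1) * A 0 0 := by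
          linarith
        calc ∑ i ∈ Finset.range (K+2+1), A (K+2) i
            = ∑ i ∈ Finset.range (K+1+1+1), A (K+1+1) i := by norm_num
          _ = ((K:ℝ)+2+1) * A 0 0 := hg
  have hPk := key k (by omega)
  have hPtop := key (N-1) (by omega)
  have hxA : ∑ i ∈ Finset.range N, x i = (N:ℝ) * A 0 0 := by
    have h1 : ∑ i ∈ Finset.range N, x i = ∑ i ∈ Finset.range N, A (N-1) i :=
      Finset.sum_congr rfl fun i hi => (htop i (Finset.mem_range.1 hi)).symm
    have h2 : Finset.range N = Finset.range ((N-1)+1) := by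
      congr 1; omega
    rw [h1, h2, hPtop, Nat.cast_sub hN]
    push_cast
    ring
  have hk1 : ((k:ℝ)+1) ≠ 0 := by positivity
  have hNne : (N:ℝ) ≠ 0 := by
    have : (0:ℝ) < N := by exact_mod_cast Nat.pos_of_ne_zero (by omega)
    linarith
  rw [hPk, hxA]
  push_cast
  rw [mul_div_cancel_left₀ _ hk1, mul_div_cancel_left₀ _ hNne]
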